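/- Let (X, d) be a metric space and T : X → X non-expanding. Suppose (v₋ₙ)_{n≥0} is a backward orbit of v (v₀ = v, T v₋₍ₙ₊₁₎ = v₋ₙ) and there is a strictly increasing sequence of positive integers (kₙ) such that v₋ₖₙ converges to some point v_α ∈ X. Then, setting k'ₙ = k_{n+1} − kₙ, the point v_α satisfies T^{k'ₙ} v_α → v_α, i.e., v_α is recurrent along the sequence (k'ₙ). -/

import Mathlib

theorem stmt_19 {X : Type*} [MetricSpace X] (T : X → X)
    (hne : ∀ x y : X, dist (T x) (T y) ≤ dist x y)
    (v : X) (w : ℕ → X) (hw0 : w 0 = v)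
    (hback : ∀ n : ℕ, T (w (n + 1)) = w n)
    (k : ℕ → ℕ) (hk : StrictMono k) (hk1 : ∀ n, 1 ≤ k n)
    (vα : X) (hconv : Filter.Tendsto (fun n => w (k n)) Filter.atTop (nhds vα)) :
    Filter.Tendsto (fun n => T^[k (n + 1) - k n] vα) Filter.atTop (nhds vα) := by
  have hiter : ∀ (m : ℕ) (x y : X), dist (T^[m] x) (T^[m] y) ≤ dist x y := by
    intro m
    induction m with
    | zero => intro x y; simp
    | succ m ih =>
      intro x y
      rw [Function.iterate_succ_apply', Function.iterate_succ_apply']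
      exact (hne _ _).trans (ih x y)
  have hwiter : ∀ (m n : ℕ), T^[m] (w (n + m)) = w n := by
    intro m
    induction m with
    | zero => intro n; simp
    | succ m ih =>
      intro n
      rw [Function.iterate_succ_apply']
      have h : n + (m + 1) = (n + 1) + m := by ring
      rw [h, ih (n + 1), hback]
  rw [tendsto_iff_dist_tendsto_zero]
  have hdist : Filter.Tendsto (fun n => dist (w (k n)) vα) Filter.atTop (nhds 0) :=
    tendsto_iff_dist_tendsto_zero.mp hconv
  have hdist' : Filter.Tendsto (fun n => dist (w (k (n + 1))) vα) Filter.atTop (nhds 0) :=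
    hdist.comp (Filter.tendsto_add_atTop_nat 1)
  have hbound : ∀ n, dist (T^[k (n + 1) - k n] vα) vα ≤
      dist (w (k (n + 1))) vα + dist (w (k n)) vα := by
    intro n
    have hle : k n ≤ k (n + 1) := (hk (Nat.lt_succ_self n)).le
    have hkey := hwiter (k (n + 1) - k n) (k n)
    rw [Nat.add_sub_cancel' hle] at hkey
    calc dist (T^[k (n + 1) - k n] vα) vα
        ≤ dist (T^[k (n + 1) - k n] vα) (T^[k (n + 1) - k n] (w (k (n + 1))))
            + dist (T^[k (n + 1) - k n] (w (k (n + 1)))) vα := dist_triangle _ _ _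
      _ ≤ dist vα (w (k (n + 1))) + dist (T^[k (n + 1) - k n] (w (k (n + 1)))) vα :=
          add_le_add (hiter _ _ _) le_rfl
      _ = dist (w (k (n + 1))) vα + dist (w (k n)) vα := by rw [hkey, dist_comm]
  have hsum : Filter.Tendsto (fun n => dist (w (k (n + 1))) vα + dist (w (k n)) vα)
      Filter.atTop (nhds 0) := by
    simpa using hdist'.add hdist
  exact squeeze_zero (fun n => dist_nonneg) hbound hsum
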